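/- Every primitive string w has an unbordered rotation; in particular, the lexicographically maximal rotation w_max of w is unbordered. -/

import Mathlib

def Primitive {α : Type*} (w : List α) : Prop :=
  ∀ (v : List α) (k : ℕ), 2 ≤ k → w ≠ (List.replicate k v).flatten

/-- A nonempty proper prefix of `s` that is also a suffix of `s` is a border;
`s` is unbordered if it has none. -/
def Unbordered {α : Type*} (s : List α) : Prop :=
  ∀ b : List α, b ≠ [] → b ≠ s → b <+: s → ¬ b <:+ s

open List

section Aux

variable {α : Type*}

lemma flatten_rep_append (t : List α) (k m : ℕ) :
    (replicate k t).flatten ++ (replicate m t).flatten = (replicate (k + m) t).flatten := by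
  rw [← flatten_append, ← replicate_add]

lemma comm_power : ∀ (N : ℕ) (b u : List α), b.length + u.length ≤ N →
    b ++ u = u ++ b →
    ∃ (t : List α) (k m : ℕ), b = (replicate k t).flatten ∧ u = (replicate m t).flatten := by
  intro N
  induction N with
  | zero =>
    intro b u hlen _
    have hb : b = [] := by
      have : b.length = 0 := by omega
      simpa [List.length_eq_zero_iff] using this
    have hu : u = [] := by
      have : u.length = 0 := by omega
      simpa [List.length_eq_zero_iff] using this
    exact ⟨[], 0, 0, by simp [hb], by simp [hu]⟩
  | succ N ih =>
    intro b u hlen heq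
    rcases eq_or_ne b [] with hb | hb
    · exact ⟨u, 0, 1, by simp [hb], by simp⟩
    rcases eq_or_ne u [] with hu | hu
    · exact ⟨b, 1, 0, by simp, by simp [hu]⟩
    have hb1 : 1 ≤ b.length := length_pos_iff.mpr hb
    have hu1 : 1 ≤ u.length := length_pos_iff.mpr hu
    rcases le_total b.length u.length with hle | hle
    · -- b is a prefix of u
      have hpre : b <+: u := by
        have h1 : b <+: u ++ b := by rw [← heq]; exact prefix_append b u
        exact prefix_of_prefix_length_le h1 (prefix_append u b) hle
      obtain ⟨s, hs⟩ := hpre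
      have heq2 : b ++ s = s ++ b := by
        have : b ++ (b ++ s) = (b ++ s) ++ b := by rw [hs, heq]
        have := this
        rw [List.append_assoc] at this
        exact List.append_cancel_left this
      have hlen2 : b.length + s.length ≤ N := by
        have := congrArg List.length hs
        simp at this
        omega
      obtain ⟨t, k, m, hbt, hst⟩ := ih b s hlen2 heq2
      exact ⟨t, k, k + m, hbt, by rw [← hs, hbt, hst, flatten_rep_append]⟩
    · -- u is a prefix of b
      have hpre : u <+: b := by
        have h1 : u <+: b ++ u := by rw [heq]; exact prefix_append u b
        exact prefix_of_prefix_length_le h1 (prefix_append b u) hle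
      obtain ⟨s, hs⟩ := hpre
      have heq2 : u ++ s = s ++ u := by
        have : u ++ (u ++ s) = (u ++ s) ++ u := by rw [hs, ← heq]
        rw [List.append_assoc] at this
        exact List.append_cancel_left this
      have hlen2 : u.length + s.length ≤ N := by
        have := congrArg List.length hs
        simp at this
        omega
      obtain ⟨t, k, m, hut, hst⟩ := ih u s hlen2 heq2
      exact ⟨t, k + m, k, by rw [← hs, hut, hst, flatten_rep_append], hut⟩

lemma aux_rot (a : α) (t : List α) : ∀ j,
    (replicate j (a :: t)).flatten ++ [a] = a :: (replicate j (t ++ [a])).flatten := by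
  intro j
  induction j with
  | zero => simp
  | succ j ih =>
    rw [replicate_succ, replicate_succ, flatten_cons, flatten_cons]
    simp only [List.cons_append, List.append_assoc, ih]
    simp

lemma rot_one (a : α) (t : List α) (k : ℕ) :
    ((replicate k (a :: t)).flatten).rotate 1 = (replicate k (t ++ [a])).flatten := by
  cases k with
  | zero => simp
  | succ k =>
    rw [replicate_succ, flatten_cons, replicate_succ, flatten_cons]
    have h1 : (a :: t) ++ (replicate k (a :: t)).flatten
        = a :: (t ++ (replicate k (a :: t)).flatten) := by simp
    rw [h1, rotate_cons_succ, rotate_zero, List.append_assoc, aux_rot]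
    simp

lemma rot_pow (t : List α) (k : ℕ) : ∀ n,
    ((replicate k t).flatten).rotate n = (replicate k (t.rotate n)).flatten := by
  intro n
  induction n with
  | zero => simp
  | succ n ih =>
    have h1 : ((replicate k t).flatten).rotate (n + 1)
        = (((replicate k t).flatten).rotate n).rotate 1 := by rw [rotate_rotate]
    rw [h1, ih]
    rcases eq_or_ne t [] with ht | ht
    · simp [ht]
    have hne : t.rotate n ≠ [] := by simpa [rotate_eq_nil_iff] using ht
    obtain ⟨a, s, has⟩ : ∃ a s, t.rotate n = a :: s := by
      cases h : t.rotate n with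
      | nil => exact absurd h hne
      | cons a s => exact ⟨a, s, rfl⟩
    have h2 : t.rotate (n + 1) = s ++ [a] := by
      rw [← rotate_rotate, has, rotate_cons_succ, rotate_zero]
    rw [has, h2, rot_one]

lemma primitive_rotate {w z : List α} (hw : Primitive w) (h : w.IsRotated z) :
    Primitive z := by
  intro v k hk hz
  obtain ⟨m, hm⟩ := h.symm
  exact hw (v.rotate m) k hk (by rw [← hm, hz, rot_pow])

lemma lex_append_left [LinearOrder α] {u v : List α} (b : List α)
    (h : List.Lex (· < ·) u v) :
    List.Lex (· < ·) (b ++ u) (b ++ v) := by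
  induction b with
  | nil => exact h
  | cons a b ih => exact List.Lex.cons ih

lemma lex_append_right [LinearOrder α] {u v : List α} (s t : List α)
    (h : List.Lex (· < ·) u v) (hl : u.length = v.length) :
    List.Lex (· < ·) (u ++ s) (v ++ t) := by
  induction h with
  | nil => simp at hl
  | @cons a l₁ l₂ h ih =>
    exact List.Lex.cons (ih (by simpa using hl))
  | rel h => exact List.Lex.rel h

end Aux

/-- Every primitive string has an unbordered rotation; in particular the
lexicographically maximal rotation is unbordered. -/
theorem max_rotation_unbordered {α : Type*} [LinearOrder α] (w zmax : List α)
    (hw : Primitive w)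
    (hmaxrot : w.IsRotated zmax)
    (hmax : ∀ z, w.IsRotated z → ¬ List.Lex (· < ·) zmax z) :
    Unbordered zmax ∧ ∃ z, w.IsRotated z ∧ Unbordered z := by
  have hprim : Primitive zmax := primitive_rotate hw hmaxrot
  have hz : Unbordered zmax := by
    intro b hbne hbz hpre hsuf
    obtain ⟨u, hu⟩ := hpre
    obtain ⟨v, hv⟩ := hsuf
    have hlen : u.length = v.length := by
      have h := congrArg List.length (hu.trans hv.symm)
      simp at h
      omega
    have hune : u ≠ [] := by
      rintro rfl
      exact hbz (by simpa using hu)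
    have hvne : v ≠ [] := by
      rintro rfl
      exact hune (by simpa [List.length_eq_zero_iff] using hlen)
    -- rotations of zmax
    have hr1 : zmax.rotate v.length = b ++ v := by
      rw [← hv, rotate_eq_drop_append_take (by simp), drop_left, take_left]
    have hr2 : zmax.rotate b.length = u ++ b := by
      rw [← hu, rotate_eq_drop_append_take (by simp), drop_left, take_left]
    have h1 : ¬ List.Lex (· < ·) zmax (b ++ v) :=
      hmax (b ++ v) (hmaxrot.trans ⟨v.length, hr1⟩)
    have h2 : ¬ List.Lex (· < ·) zmax (u ++ b) :=
      hmax (u ++ b) (hmaxrot.trans ⟨b.length, hr2⟩)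
    -- u = v
    have huv : u = v := by
      by_contra hne
      haveI : IsTrichotomous α (· < ·) := ⟨fun a b h1 h2 => le_antisymm (not_lt.mp h2) (not_lt.mp h1)⟩
      rcases trichotomous_of (List.Lex (· < ·)) u v with h | h | h
      · exact h1 (by rw [← hu]; exact lex_append_left b h)
      · exact hne h
      · exact h2 (by rw [← hv]; exact lex_append_right b b h hlen.symm)
    -- so zmax = b ++ u = u ++ b
    have hcomm : b ++ u = u ++ b := by rw [hu, ← hv, huv]
    obtain ⟨t, k, m, hbt, hut⟩ := comm_power (b.length + u.length) b u le_rfl hcomm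
    have hk : 1 ≤ k := by
      by_contra h
      have : k = 0 := by omega
      exact hbne (by simp [hbt, this])
    have hm : 1 ≤ m := by
      by_contra h
      have : m = 0 := by omega
      exact hune (by simp [hut, this])
    exact hprim t (k + m) (by omega) (by rw [← hu, hbt, hut, flatten_rep_append])
  exact ⟨hz, zmax, hmaxrot, hz⟩
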